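/- arXiv:1808.07676 — 3 statements merged into one kernel-verified Lean document; each statement's English description precedes it below -/
import Mathlib

section
/- Let a and D be coprime integers both greater than 1. For each prime q dividing D, let m_q be the largest integer such that a^(e_q) ≡ 1 (mod q^(m_q)), where e_q is the order of a modulo q if q is odd, and modulo 4 if q = 2. Let m be the maximum of the m_q. Then for every positive integer b dividing some power of D, the multiplicative order of a in (Z/bZ)^* is at least b·D^(−m). -/
private lemma padic_eq_of_dvd_not_dvd {q m N : ℕ} (hq : q.Prime) (hN : N ≠ 0)
    (h1 : q ^ m ∣ N) (h2 : ¬ q ^ (m + 1) ∣ N) : padicValNat q N = m := by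
  haveI : Fact q.Prime := ⟨hq⟩
  have a1 := (padicValNat_dvd_iff_le hN (p := q) (n := m)).mp h1
  have a2 : ¬ (m + 1 ≤ padicValNat q N) := fun h => h2 ((padicValNat_dvd_iff_le hN).mpr h)
  omega

private lemma dvd_pow_sub_one_iff {a n t : ℕ} (ha : 0 < a) :
    (n ∣ a ^ t - 1) ↔ (a : ZMod n) ^ t = 1 := by
  have h1 : 1 ≤ a ^ t := Nat.one_le_pow _ _ ha
  rw [← ZMod.natCast_eq_zero_iff, Nat.cast_sub h1, sub_eq_zero]
  push_cast
  rfl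

private lemma odd_pow_sub_one_val (a t : ℕ) (ha : 1 < a) (haodd : a % 2 = 1) (ht : t % 2 = 1) :
    padicValNat 2 (a ^ t - 1) = padicValNat 2 (a - 1) := by
  haveI : Fact (Nat.Prime 2) := ⟨Nat.prime_two⟩
  set S : ℕ := ∑ i ∈ Finset.range t, a ^ i with hS
  have h1 : 1 ≤ a := ha.le
  have h1t : 1 ≤ a ^ t := Nat.one_le_pow _ _ (by omega)
  have hid : a ^ t - 1 = S * (a - 1) := by
    have hgeo := geom_sum_mul (a : ℤ) t
    have : ((a ^ t - 1 : ℕ) : ℤ) = ((S * (a - 1) : ℕ) : ℤ) := by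
      rw [Nat.cast_sub h1t, Nat.cast_mul, Nat.cast_sub h1]
      rw [hS]
      push_cast
      rw [← hgeo]
    exact_mod_cast this
  have hkey : ∀ n : ℕ, (∑ i ∈ Finset.range n, a ^ i) % 2 = n % 2 := by
    intro n
    induction n with
    | zero => simp
    | succ n ih =>
      rw [Finset.sum_range_succ]
      have hp : a ^ n % 2 = 1 := by rw [Nat.pow_mod, haodd, one_pow]; rfl
      omega
  have hSmod : S % 2 = 1 := by rw [hS, hkey, ht]
  have hSv : padicValNat 2 S = 0 := padicValNat.eq_zero_of_not_dvd (by omega)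
  rw [hid, padicValNat.mul (by omega) (by omega), hSv, zero_add]

private lemma keyq_odd {q a t mqv : ℕ} (hq : q.Prime) (hq2 : q ≠ 2) (ha : 1 < a)
    (hqa : ¬ q ∣ a) (ht : 0 < t)
    (hNne : a ^ orderOf (a : ZMod q) - 1 ≠ 0)
    (hv : padicValNat q (a ^ orderOf (a : ZMod q) - 1) = mqv) :
    padicValNat q (a ^ t - 1) ≤ mqv + padicValNat q t := by
  haveI : Fact q.Prime := ⟨hq⟩
  set e := orderOf (a : ZMod q) with he
  by_cases hdvd : e ∣ t
  · obtain ⟨s, rfl⟩ := hdvd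
    have hs : s ≠ 0 := by rintro rfl; simp at ht
    have hae : 1 < a ^ e := by
      rcases Nat.lt_or_ge 1 (a ^ e) with h | h
      · exact h
      · exact absurd (by omega) hNne
    have hxy : q ∣ a ^ e - 1 := by
      rw [dvd_pow_sub_one_iff (by omega)]
      exact pow_orderOf_eq_one _
    have hx : ¬ q ∣ a ^ e := fun h => hqa (hq.dvd_of_dvd_pow h)
    have hlte := padicValNat.pow_sub_pow (p := q) (hq.odd_of_ne_two hq2)
      (x := a ^ e) (y := 1) hae (by simpa using hxy) hx hs
    simp only [one_pow, ← pow_mul] at hlte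
    have hst : padicValNat q s ≤ padicValNat q (e * s) := by
      have hes : e * s ≠ 0 := by positivity
      rw [← padicValNat_dvd_iff_le hes]
      exact dvd_trans pow_padicValNat_dvd (Dvd.intro_left e rfl)
    omega
  · have hnd : ¬ q ∣ a ^ t - 1 := by
      rw [dvd_pow_sub_one_iff (by omega : 0 < a)]
      exact fun h => hdvd (orderOf_dvd_of_pow_eq_one h)
    rw [padicValNat.eq_zero_of_not_dvd hnd]
    omega

private lemma keyq_two {a t mqv : ℕ} (ha : 1 < a) (haodd : ¬ 2 ∣ a) (ht : 0 < t)
    (hv : padicValNat 2 (a ^ orderOf (a : ZMod 4) - 1) = mqv) :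
    padicValNat 2 (a ^ t - 1) ≤ mqv + padicValNat 2 t := by
  haveI : Fact (Nat.Prime 2) := ⟨Nat.prime_two⟩
  have ha2 : a % 2 = 1 := by omega
  have hmod : a % 4 = 1 ∨ a % 4 = 3 := by omega
  have hcastmod : ((a % 4 : ℕ) : ZMod 4) = (a : ZMod 4) := ZMod.natCast_mod a 4
  rcases hmod with hmod | hmod
  · -- a ≡ 1 [MOD 4]
    have hcast : (a : ZMod 4) = 1 := by rw [← hcastmod, hmod, Nat.cast_one]
    have he : orderOf (a : ZMod 4) = 1 := by rw [hcast, orderOf_one]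
    rw [he, pow_one] at hv
    have hva1 : padicValNat 2 (a + 1) = 1 := by
      refine padic_eq_of_dvd_not_dvd Nat.prime_two (by omega) (by omega) ?_
      show ¬ (2 ^ 2 ∣ a + 1)
      omega
    rcases Nat.even_or_odd t with hev | hodd
    · have hlte := padicValNat.pow_two_sub_pow (x := a) (y := 1) ha (by omega) (by omega)
        (by omega) hev
      simp only [one_pow] at hlte
      omega
    · rw [odd_pow_sub_one_val a t ha ha2 (Nat.odd_iff.mp hodd), hv]
      omega
  · -- a ≡ 3 [MOD 4]
    have hcast : (a : ZMod 4) = 3 := by rw [← hcastmod, hmod]; rfl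
    have he : orderOf (a : ZMod 4) = 2 := by
      rw [hcast]
      exact orderOf_eq_prime (by decide) (by decide)
    rw [he] at hv
    have hsq : a ^ 2 - 1 = (a + 1) * (a - 1) := by
      have := sq_tsub_sq a 1
      simpa using this
    have hvmul : mqv = padicValNat 2 (a + 1) + padicValNat 2 (a - 1) := by
      rw [← hv, hsq, padicValNat.mul (by omega) (by omega)]
    rcases Nat.even_or_odd t with hev | hodd
    · have hlte := padicValNat.pow_two_sub_pow (x := a) (y := 1) ha (by omega) (by omega)
        (by omega) hev
      simp only [one_pow] at hlte
      omega
    · rw [odd_pow_sub_one_val a t ha ha2 (Nat.odd_iff.mp hodd)]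
      omega

theorem stmt_2 (a D : ℕ) (ha : 1 < a) (hD : 1 < D) (hcop : Nat.Coprime a D)
    (mq : ℕ → ℕ)
    (hmq : ∀ q ∈ D.primeFactors,
      q ^ (mq q) ∣ a ^ (orderOf (a : ZMod (if q = 2 then 4 else q))) - 1 ∧
      ¬ q ^ (mq q + 1) ∣ a ^ (orderOf (a : ZMod (if q = 2 then 4 else q))) - 1)
    (m : ℕ) (hm : m = D.primeFactors.sup mq) :
    ∀ b k : ℕ, 0 < b → 0 < k → b ∣ D ^ k →
      (b : ℝ) * (D : ℝ) ^ (-(m : ℤ)) ≤ (orderOf (a : ZMod b) : ℝ) := by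
  intro b k hb hk hbdvd
  set t := orderOf (a : ZMod b) with htdef
  have hcopb : Nat.Coprime a b := Nat.Coprime.coprime_dvd_right hbdvd (hcop.pow_right k)
  -- t > 0
  have htpos : 0 < t := by
    rw [htdef, orderOf_pos_iff, isOfFinOrder_iff_pow_eq_one]
    refine ⟨Nat.totient b, Nat.totient_pos.mpr hb, ?_⟩
    have := Nat.ModEq.pow_totient hcopb
    have h2 := (ZMod.natCast_eq_natCast_iff _ _ _).mpr this
    push_cast at h2
    exact h2
  -- b ∣ a ^ t - 1
  have hbN : b ∣ a ^ t - 1 := by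
    rw [dvd_pow_sub_one_iff (by omega : 0 < a)]
    exact pow_orderOf_eq_one _
  have hNne : a ^ t - 1 ≠ 0 := by
    have : 1 < a ^ t := Nat.one_lt_pow htpos.ne' ha
    omega
  -- key divisibility
  have hdvd : b ∣ D ^ m * t := by
    have hbne : b ≠ 0 := hb.ne'
    have hne : D ^ m * t ≠ 0 := by positivity
    rw [← Nat.factorization_le_iff_dvd hbne hne]
    rw [Finsupp.le_iff]
    intro q hqsup
    rw [Nat.support_factorization, Nat.mem_primeFactors] at hqsup
    obtain ⟨hq, hqb, -⟩ := hqsup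
    haveI : Fact q.Prime := ⟨hq⟩
    have hqD : q ∣ D := hq.dvd_of_dvd_pow (hqb.trans hbdvd)
    have hqmem : q ∈ D.primeFactors := Nat.mem_primeFactors.mpr ⟨hq, hqD, by omega⟩
    obtain ⟨hm1, hm2⟩ := hmq q hqmem
    have hMne : a ^ (orderOf (a : ZMod (if q = 2 then 4 else q))) - 1 ≠ 0 := by
      intro h
      rw [h] at hm2
      exact hm2 (dvd_zero _)
    have hveq : padicValNat q (a ^ (orderOf (a : ZMod (if q = 2 then 4 else q))) - 1) = mq q :=
      padic_eq_of_dvd_not_dvd hq hMne hm1 hm2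
    have hqa : ¬ q ∣ a := by
      intro h
      have h1 : q ∣ 1 := hcop ▸ Nat.dvd_gcd h hqD
      have := Nat.dvd_one.mp h1
      have := hq.one_lt
      omega
    -- the key valuation bound
    have hkey : padicValNat q (a ^ t - 1) ≤ mq q + padicValNat q t := by
      by_cases hq2 : q = 2
      · subst hq2
        rw [if_pos (rfl : (2:ℕ) = 2)] at hveq
        exact keyq_two ha hqa htpos hveq
      · rw [if_neg hq2] at hveq hMne
        exact keyq_odd hq hq2 ha hqa htpos hMne hveq
    have hvb : padicValNat q b ≤ padicValNat q (a ^ t - 1) := by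
      rw [← padicValNat_dvd_iff_le hNne]
      exact dvd_trans pow_padicValNat_dvd hbN
    have hmqm : mq q ≤ m := hm ▸ Finset.le_sup hqmem
    have hDfac : 1 ≤ D.factorization q := hq.factorization_pos_of_dvd (by omega) hqD
    rw [Nat.factorization_def _ hq]
    rw [Nat.factorization_mul (by positivity) htpos.ne', Nat.factorization_pow]
    simp only [Finsupp.coe_add, Finsupp.coe_smul, Pi.add_apply, Pi.smul_apply, smul_eq_mul]
    rw [Nat.factorization_def _ hq]
    have h1 := Nat.factorization_def t hq
    have h2 := Nat.factorization_def D hq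
    have h3 : m ≤ m * padicValNat q D := Nat.le_mul_of_pos_right m (by omega)
    omega
  have hble : b ≤ D ^ m * t := Nat.le_of_dvd (by positivity) hdvd
  -- real inequality
  have hDpos : (0 : ℝ) < (D : ℝ) ^ (m : ℕ) := by positivity
  rw [zpow_neg, zpow_natCast, ← div_eq_mul_inv, div_le_iff₀ hDpos]
  have : (b : ℝ) ≤ (t : ℝ) * (D : ℝ) ^ (m : ℕ) := by
    have : (b : ℝ) ≤ ((D ^ m * t : ℕ) : ℝ) := Nat.cast_le.mpr hble
    push_cast at this
    linarith
  exact this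
end

section
/- Let θ(z) = (1+z)/(1−z), and for 0 < r < 1, let U_r denote the image under θ of the closed disk of radius r centered at 0 (a closed disk intersecting the real line orthogonally at θ(−r) and θ(r)). If 0 < r ≤ r' < 1 and s ≥ 1 satisfy θ(−r') ≤ θ(−r)/s, then the set (1/s)·U_r = {w/s : w ∈ U_r} is contained in U_{r'}. -/
private lemma aux_core (r r' c x y : ℝ) (hr : 0 < r) (hrr' : r ≤ r') (hr' : r' < 1)
    (hc_nonpos : c ≤ 0) (hc_gt : -1 < c)
    (hkey : r - c ≤ r' * (1 - c * r))
    (hx : -r ≤ x) (hq : x ^ 2 + y ^ 2 ≤ r ^ 2) :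
    (c + x)^2 + y^2 ≤ r'^2 * ((1 + c * x)^2 + (c * y)^2) := by
  have hr'2 : (0:ℝ) ≤ 1 - r'^2 := by nlinarith
  have hc2 : c^2 ≤ 1 := by
    nlinarith [mul_pos (show (0:ℝ) < 1 + c by linarith) (show (0:ℝ) < 1 - c by linarith)]
  have hA : 0 ≤ (-2*c)*(1-r'^2)*(x + r) :=
    mul_nonneg (mul_nonneg (by linarith) hr'2) (by linarith)
  have hB : 0 ≤ (1 - c^2*r'^2)*(r^2 - x^2 - y^2) := by
    apply mul_nonneg
    · nlinarith [mul_nonneg (show (0:ℝ) ≤ 1 - c^2 by linarith) (sq_nonneg r')]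
    · linarith
  have hC : 0 ≤ r'^2*(1-c*r)^2 - (r-c)^2 := by
    have h6 : (r-c)^2 ≤ (r'*(1-c*r))^2 :=
      pow_le_pow_left₀ (by linarith) hkey 2
    nlinarith [h6]
  nlinarith [hA, hB, hC]

private lemma aux_desq (a b : ℝ) (ha : 0 ≤ a) (hb : 0 ≤ b) (h : a ^ 2 ≤ b ^ 2) : a ≤ b := by
  nlinarith [h]


theorem stmt_4 (r r' s : ℝ) (hr : 0 < r) (hrr' : r ≤ r') (hr' : r' < 1) (hs : 1 ≤ s)
    (hcond : (1 - r') / (1 + r') ≤ ((1 - r) / (1 + r)) / s) :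
    (fun w : ℂ => w / (s : ℂ)) ''
        ((fun z : ℂ => (1 + z) / (1 - z)) '' Metric.closedBall (0 : ℂ) r) ⊆
      (fun z : ℂ => (1 + z) / (1 - z)) '' Metric.closedBall (0 : ℂ) r' := by
  rintro w ⟨t, ⟨z, hz, rfl⟩, rfl⟩
  simp only [Metric.mem_closedBall, dist_zero_right] at hz
  have hr1 : r < 1 := lt_of_le_of_lt hrr' hr'
  have hs0 : (0:ℝ) < s := lt_of_lt_of_le one_pos hs
  have hs1 : (0:ℝ) < 1 + s := by linarith
  obtain ⟨c, hc⟩ : ∃ c : ℝ, c = (1 - s) / (1 + s) := ⟨_, rfl⟩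
  have hc_nonpos : c ≤ 0 := by
    rw [hc]; exact div_nonpos_of_nonpos_of_nonneg (by linarith) (by linarith)
  have hc_gt : -1 < c := by
    rw [hc, lt_div_iff₀ hs1]; ring_nf; linarith
  have hsc : s * (1 + c) = 1 - c := by
    rw [hc]; field_simp; ring
  -- the key real inequality, rewritten form of hcond
  have hcond' : s * (1 + r) * (1 - r') ≤ (1 - r) * (1 + r') := by
    have h1 : (0:ℝ) < 1 + r' := by linarith
    have h2 : (0:ℝ) < (1 + r) * s := by positivity
    rw [div_div, div_le_div_iff₀ h1 h2] at hcond
    nlinarith [hcond]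
  -- bound : r - c ≤ r' * (1 - c*r)
  have hkey : r - c ≤ r' * (1 - c * r) := by
    have e : c * (1 + s) = 1 - s := by rw [hc]; field_simp
    have h9 : (r - c) * (1 + s) ≤ (r' * (1 - c * r)) * (1 + s) := by
      have e1 : (r - c) * (1 + s) = r * (1 + s) - (1 - s) := by linear_combination -e
      have e2 : (r' * (1 - c * r)) * (1 + s) = r' * ((1 + s) - r * (1 - s)) := by
        linear_combination (-r' * r) * e
      rw [e1, e2]; nlinarith [hcond']
    exact le_of_mul_le_mul_right h9 hs1
  have habs : ‖z‖ ≤ r := hz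
  have hx : -r ≤ z.re := by
    have h1 := Complex.abs_re_le_norm z
    have := abs_le.mp (le_trans h1 habs)
    linarith [this.1]
  have hq : z.re ^ 2 + z.im ^ 2 ≤ r ^ 2 := by
    have h2 := Complex.sq_norm z
    rw [Complex.normSq_apply] at h2
    nlinarith [habs, norm_nonneg z]
  -- denominators nonzero
  have hcz : ‖(c : ℂ) * z‖ < 1 := by
    rw [norm_mul, Complex.norm_real]
    have h3 : |c| < 1 := abs_lt.mpr ⟨hc_gt, lt_of_le_of_lt hc_nonpos one_pos⟩
    calc |c| * ‖z‖ ≤ 1 * r := by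
          apply mul_le_mul (le_of_lt h3) hz (norm_nonneg _) zero_le_one
      _ < 1 := by linarith
  have hden : (1 : ℂ) + (c : ℂ) * z ≠ 0 := by
    intro h
    have h4 : ‖(c:ℂ) * z‖ = 1 := by
      have h5 : (c:ℂ) * z = -1 := by linear_combination h
      rw [h5]; simp
    linarith [hcz, h4.le]
  have h1z : (1 : ℂ) - z ≠ 0 := by
    intro h
    have h4 : ‖z‖ = 1 := by
      have h5 : z = 1 := by linear_combination -h
      rw [h5]; simp
    linarith
  obtain ⟨u, hu⟩ : ∃ u : ℂ, u = ((c : ℂ) + z) / (1 + (c : ℂ) * z) := ⟨_, rfl⟩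
  -- norm bound
  have hnorm : ‖u‖ ≤ r' := by
    rw [hu, norm_div, div_le_iff₀ (norm_pos_iff.mpr hden)]
    have hsq : ‖(c:ℂ) + z‖ ^ 2 ≤ (r' * ‖1 + (c:ℂ) * z‖) ^ 2 := by
      have e1 : ‖(c:ℂ) + z‖ ^ 2 = (c + z.re)^2 + z.im^2 := by
        rw [Complex.sq_norm, Complex.normSq_apply]
        simp [Complex.add_re, Complex.add_im]
        ring
      have e2 : ‖(1:ℂ) + (c:ℂ) * z‖ ^ 2 = (1 + c * z.re)^2 + (c * z.im)^2 := by
        rw [Complex.sq_norm, Complex.normSq_apply]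
        simp [Complex.add_re, Complex.add_im, Complex.mul_re, Complex.mul_im]
        ring
      rw [e1, mul_pow, e2]
      have := aux_core r r' c z.re z.im hr hrr' hr' hc_nonpos hc_gt hkey hx hq
      nlinarith [this]
    exact aux_desq _ _ (norm_nonneg _) (mul_nonneg (by linarith) (norm_nonneg _)) hsq
  have h1u : (1 : ℂ) - u ≠ 0 := by
    intro h
    have h4 : u = 1 := by linear_combination -h
    rw [h4] at hnorm; simp at hnorm; linarith
  have hsC : (s : ℂ) ≠ 0 := by exact_mod_cast ne_of_gt hs0
  refine ⟨u, ?_, ?_⟩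
  · simpa [Metric.mem_closedBall, dist_zero_right] using hnorm
  · show (1 + u) / (1 - u) = ((1 + z) / (1 - z)) / (s : ℂ)
    have h1u' : (1:ℂ) + (c:ℂ)*z - ((c:ℂ) + z) ≠ 0 := by
      have h8 : (1:ℂ) + (c:ℂ)*z - ((c:ℂ) + z) = (1 + (c:ℂ)*z) * (1 - u) := by
        rw [hu]; field_simp
      rw [h8]; exact mul_ne_zero hden h1u
    have hscC : (s:ℂ) * (1 + (c:ℂ)) = 1 - (c:ℂ) := by exact_mod_cast hsc
    rw [hu]
    field_simp
    ring_nf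
    linear_combination (1 + z) * (1 - z) * hscC
end

section
/- Let f be analytic on the open unit disk, let a ≥ e and b > 1 be reals, and let S ⊆ D be a set containing (0,1) on which |f(z)| ≤ a·b^(−1/(1−|z|)). If α ∈ S is an algebraic number such that f(α) is algebraic and nonzero, with [ℚ(α, f(α)):ℚ] ≤ d and multiplicative heights H(α), H(f(α)) ≤ H where d ≥ 2 and H ≥ e, then |α| ≤ 1 − (log b / log a)/(2d·log H). -/
/-- The primitive integer polynomial (up to sign) associated to the minimal
polynomial of `α` over `ℚ`. -/
noncomputable def intMinpoly (α : ℂ) : Polynomial ℤ :=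
  (IsLocalization.integerNormalization (nonZeroDivisors ℤ) (minpoly ℚ α)).primPart

/-- The absolute multiplicative Weil height of an algebraic number `α : ℂ`,
defined as `(a * ∏ max 1 |z|) ^ (1 / deg)`, where the product runs over the
complex roots (with multiplicity) of the primitive integer minimal polynomial
of `α`, and `a` is the absolute value of its leading coefficient. -/
noncomputable def multHeight (α : ℂ) : ℝ :=
  ((((intMinpoly α).leadingCoeff.natAbs : ℝ)) *
      (((intMinpoly α).map (Int.castRingHom ℂ)).roots.map
        (fun z => max 1 ‖z‖)).prod) ^
    ((1 : ℝ) / ((intMinpoly α).natDegree : ℝ))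

open Polynomial in
lemma intMinpoly_facts {β : ℂ} (hβ : IsAlgebraic ℚ β) :
    intMinpoly β ≠ 0 ∧ (intMinpoly β).natDegree = (minpoly ℚ β).natDegree ∧
      Polynomial.aeval β (intMinpoly β) = 0 := by
  have hmin : minpoly ℚ β ≠ 0 := minpoly.ne_zero hβ.isIntegral
  set q := IsLocalization.integerNormalization (nonZeroDivisors ℤ) (minpoly ℚ β) with hq
  have hq0 : q ≠ 0 := fun h => hmin (IsFractionRing.integerNormalization_eq_zero_iff.mp h)
  obtain ⟨c, hc⟩ :=
    IsLocalization.integerNormalization_map_to_map (nonZeroDivisors ℤ) (minpoly ℚ β)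
  have hcne : ((algebraMap ℤ ℚ) (c : ℤ)) ≠ 0 := by
    have := nonZeroDivisors.coe_ne_zero c
    simpa using this
  have hdeg : q.natDegree = (minpoly ℚ β).natDegree := by
    have h1 : (q.map (algebraMap ℤ ℚ)).natDegree = q.natDegree :=
      natDegree_map_eq_of_injective (algebraMap ℤ ℚ).injective_int q
    rw [hc] at h1
    rw [← h1, algebra_compatible_smul ℚ ((c : ℤ)) (minpoly ℚ β), smul_eq_C_mul,
      natDegree_C_mul hcne]
  have hpi : intMinpoly β = q.primPart := rfl
  have r1 : intMinpoly β ≠ 0 := by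
    rw [hpi]; exact Polynomial.primPart_ne_zero q
  have r2 : (intMinpoly β).natDegree = (minpoly ℚ β).natDegree := by
    rw [hpi, Polynomial.natDegree_primPart, hdeg]
  refine ⟨r1, r2, ?_⟩
  rw [hpi]
  have haq : Polynomial.aeval β q = 0 :=
    IsLocalization.integerNormalization_aeval_eq_zero (nonZeroDivisors ℤ) (minpoly ℚ β)
      (minpoly.aeval ℚ β)
  exact Polynomial.aeval_primPart_eq_zero hq0 haq

open Polynomial in
lemma intMinpoly_coeff_zero_ne_zero {β : ℂ} (hβ : IsAlgebraic ℚ β) (h0 : β ≠ 0) :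
    (intMinpoly β).coeff 0 ≠ 0 := by
  have hmin : minpoly ℚ β ≠ 0 := minpoly.ne_zero hβ.isIntegral
  set q := IsLocalization.integerNormalization (nonZeroDivisors ℤ) (minpoly ℚ β) with hq
  obtain ⟨c, hc⟩ :=
    IsLocalization.integerNormalization_map_to_map (nonZeroDivisors ℤ) (minpoly ℚ β)
  have hcne : ((c : ℤ) : ℚ) ≠ 0 := by
    exact_mod_cast nonZeroDivisors.coe_ne_zero c
  have hmc0 : (minpoly ℚ β).coeff 0 ≠ 0 := minpoly.coeff_zero_ne_zero hβ.isIntegral h0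
  have hqc0 : q.coeff 0 ≠ 0 := by
    intro h
    have := congrArg (fun P => Polynomial.coeff P 0) hc
    simp only [coeff_map, h, map_zero, coeff_smul] at this
    rw [zsmul_eq_mul] at this
    exact (mul_ne_zero hcne hmc0) (this.symm.trans (by rw [← hq, h, map_zero]))
  intro h
  have hqd : q = C q.content * q.primPart := q.eq_C_content_mul_primPart
  have := congrArg (fun P => Polynomial.coeff P 0) hqd
  simp only [coeff_C_mul] at this
  rw [show q.primPart = intMinpoly β from rfl, h, mul_zero] at this
  exact hqc0 this

lemma multiset_prod_abs_le (s : Multiset ℂ) :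
    (s.map (fun z => ‖z‖)).prod ≤ (s.map fun z => max 1 (‖z‖)).prod := by
  induction s using Multiset.induction with
  | empty => simp
  | cons a s ih =>
    simp only [Multiset.map_cons, Multiset.prod_cons]
    have h1 : (0:ℝ) ≤ (s.map (fun z => ‖z‖)).prod :=
      Multiset.prod_nonneg (by
        intro x hx
        obtain ⟨z, _, rfl⟩ := Multiset.mem_map.mp hx
        exact norm_nonneg z)
    exact mul_le_mul (le_max_right _ _) ih h1 (le_trans zero_le_one (le_max_left _ _))

lemma multiset_one_le_prod_max (s : Multiset ℂ) :
    1 ≤ (s.map fun z => max 1 (‖z‖)).prod := by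
  induction s using Multiset.induction with
  | empty => simp
  | cons a s ih =>
    simp only [Multiset.map_cons, Multiset.prod_cons]
    calc (1:ℝ) = 1 * 1 := (one_mul 1).symm
    _ ≤ max 1 (‖a‖) * (s.map fun z => max 1 (‖z‖)).prod :=
      mul_le_mul (le_max_left _ _) ih zero_le_one
        (le_trans zero_le_one (le_max_left _ _))

lemma multiset_prod_max_nonneg (s : Multiset ℂ) :
    (0:ℝ) ≤ (s.map fun z => max 1 (‖z‖)).prod :=
  le_trans zero_le_one (multiset_one_le_prod_max s)

open Polynomial in
/-- Liouville-type lower bound. -/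
lemma liouville_bound {β : ℂ} (hβ : IsAlgebraic ℚ β) (h0 : β ≠ 0)
    {d : ℕ} (hn : (minpoly ℚ β).natDegree ≤ d)
    {H : ℝ} (h1H : 1 ≤ H) (hH : multHeight β ≤ H) :
    H ^ (-(d : ℝ)) ≤ ‖β‖ := by
  obtain ⟨hp0, hpdeg, hpa⟩ := intMinpoly_facts hβ
  set p := intMinpoly β with hp
  set P := p.map (Int.castRingHom ℂ) with hP
  have hP0 : P ≠ 0 := by
    rw [hP, Polynomial.map_ne_zero_iff (f := Int.castRingHom ℂ) Int.cast_injective]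
    exact hp0
  have hcard : Multiset.card P.roots = P.natDegree :=
    Polynomial.splits_iff_card_roots.mp (IsAlgClosed.splits P)
  have hfac := Polynomial.C_leadingCoeff_mul_prod_multiset_X_sub_C hcard
  -- eval at 0
  have heval0 : ‖P.eval 0‖ =
      ‖P.leadingCoeff‖ * (P.roots.map (fun z => ‖z‖)).prod := by
    have hnprod : ∀ m : Multiset ℂ, ‖m.prod‖ = (m.map (fun z => ‖z‖)).prod := fun m => by
      induction m using Multiset.induction <;> simp_all
    conv_lhs => rw [← hfac]
    rw [Polynomial.eval_mul, Polynomial.eval_C, Polynomial.eval_multiset_prod,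
      Multiset.map_map, norm_mul, hnprod, Multiset.map_map]
    congr 1
    apply congrArg
    apply Multiset.map_congr rfl
    intro z _
    simp
  -- facts about leading coefficient
  have hlc : ‖P.leadingCoeff‖ = (p.leadingCoeff.natAbs : ℝ) := by
    rw [hP, Polynomial.leadingCoeff_map_of_injective Int.cast_injective]
    rw [show ((Int.castRingHom ℂ) p.leadingCoeff) = ((p.leadingCoeff : ℂ)) from rfl,
      Complex.norm_intCast]
    rw [Nat.cast_natAbs, Int.cast_abs]
  have hlc1 : (1:ℝ) ≤ (p.leadingCoeff.natAbs : ℝ) := by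
    have h1 : p.leadingCoeff ≠ 0 := Polynomial.leadingCoeff_ne_zero.mpr hp0
    have h2 : 1 ≤ p.leadingCoeff.natAbs := Int.natAbs_pos.mpr h1
    exact_mod_cast h2
  -- constant coefficient lower bound
  have hc0 : (1:ℝ) ≤ ‖P.eval 0‖ := by
    have h := intMinpoly_coeff_zero_ne_zero hβ h0
    have heq : P.eval 0 = ((p.coeff 0 : ℤ) : ℂ) := by
      rw [hP, Polynomial.eval_map, Polynomial.eval₂_at_zero]
      rfl
    rw [heq, Complex.norm_intCast]
    exact_mod_cast Int.one_le_abs h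
  -- β is a root
  have hβmem : β ∈ P.roots := by
    rw [Polynomial.mem_roots hP0, Polynomial.IsRoot.def, hP, Polynomial.eval_map]
    rw [Polynomial.aeval_def, algebraMap_int_eq] at hpa
    exact hpa
  have hsplit : P.roots = β ::ₘ P.roots.erase β := (Multiset.cons_erase hβmem).symm
  set E := ((P.roots.erase β).map (fun z => ‖z‖)).prod with hE
  set Em := ((P.roots.erase β).map fun z => max 1 (‖z‖)).prod with hEm
  set F := (P.roots.map fun z => max 1 (‖z‖)).prod with hF
  set A := (p.leadingCoeff.natAbs : ℝ) with hA
  have hprodsplit : (P.roots.map (fun z => ‖z‖)).prod = ‖β‖ * E := by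
    rw [hsplit]; simp [hE]
  have hFsplit : F = max 1 (‖β‖) * Em := by
    rw [hF, hsplit]; simp [hEm]
  have hEEm : E ≤ Em := multiset_prod_abs_le _
  have hEm1 : (1:ℝ) ≤ Em := multiset_one_le_prod_max _
  have hEmF : Em ≤ F := by
    rw [hFsplit]
    nlinarith [le_max_left 1 (‖β‖)]
  have hF1 : (1:ℝ) ≤ F := le_trans hEm1 hEmF
  set M := A * F with hM
  have hM1 : (1:ℝ) ≤ M := by nlinarith
  have habs : (0:ℝ) ≤ ‖β‖ := norm_nonneg β
  have key : 1 ≤ ‖β‖ * M := by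
    have h1 : (1:ℝ) ≤ A * (‖β‖ * E) := by
      rw [← hprodsplit, ← hlc, ← heval0]; exact hc0
    have hEF : E ≤ F := le_trans hEEm hEmF
    have h2 : A * (‖β‖ * E) ≤ A * (‖β‖ * F) :=
      mul_le_mul_of_nonneg_left (mul_le_mul_of_nonneg_left hEF habs) (by linarith)
    have h3 : ‖β‖ * M = A * (‖β‖ * F) := by rw [hM]; ring
    linarith
  -- relate M and multHeight
  have hn1 : 1 ≤ p.natDegree := by
    rw [hpdeg]; exact minpoly.natDegree_pos hβ.isIntegral
  have hnne : ((p.natDegree : ℝ)) ≠ 0 := by positivity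
  have hM0 : (0:ℝ) < M := lt_of_lt_of_le one_pos hM1
  have hmh : multHeight β = M ^ ((1:ℝ) / (p.natDegree : ℝ)) := rfl
  have hMpow : M = multHeight β ^ ((p.natDegree : ℝ)) := by
    rw [hmh, ← Real.rpow_mul hM0.le, one_div_mul_cancel hnne, Real.rpow_one]
  have hmh1 : (1:ℝ) ≤ multHeight β := by
    rw [hmh]
    exact Real.one_le_rpow hM1 (by positivity)
  -- chain of inequalities
  have hMle : M ≤ H ^ (d:ℝ) := by
    rw [hMpow]
    calc multHeight β ^ ((p.natDegree : ℝ)) ≤ H ^ ((p.natDegree : ℝ)) :=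
      Real.rpow_le_rpow (le_trans zero_le_one hmh1) hH (by positivity)
    _ ≤ H ^ (d:ℝ) := Real.rpow_le_rpow_of_exponent_le h1H (by
        rw [hpdeg] at *
        exact_mod_cast hn)
  have hfinal : H ^ (-(d:ℝ)) ≤ 1 / M := by
    rw [Real.rpow_neg (le_trans zero_le_one h1H), inv_eq_one_div]
    exact one_div_le_one_div_of_le hM0 hMle
  calc H ^ (-(d:ℝ)) ≤ 1 / M := hfinal
  _ ≤ ‖β‖ := by rw [div_le_iff₀ hM0]; exact key

set_option maxHeartbeats 1000000 in
theorem stmt_5 (f : ℂ → ℂ) (hf : DifferentiableOn ℂ f (Metric.ball (0 : ℂ) 1))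
    (a b : ℝ) (ha : Real.exp 1 ≤ a) (hb : 1 < b)
    (S : Set ℂ) (hS : S ⊆ Metric.ball (0 : ℂ) 1)
    (hS01 : ∀ x : ℝ, 0 < x → x < 1 → (x : ℂ) ∈ S)
    (hdecay : ∀ z ∈ S, ‖f z‖ ≤ a * b ^ (-(1 / (1 - ‖z‖))))
    (α : ℂ) (hα : α ∈ S) (halgα : IsAlgebraic ℚ α) (halgf : IsAlgebraic ℚ (f α))
    (hfα0 : f α ≠ 0)
    (d : ℕ) (hd : 2 ≤ d)
    (hdeg : Module.finrank ℚ
      (IntermediateField.adjoin ℚ {α, f α} : IntermediateField ℚ ℂ) ≤ d)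
    (H : ℝ) (hH : Real.exp 1 ≤ H)
    (hHα : multHeight α ≤ H) (hHfα : multHeight (f α) ≤ H) :
    ‖α‖ ≤ 1 - (Real.log b / Real.log a) / (2 * d * Real.log H) := by
  -- basic log facts
  have h1a : 1 ≤ Real.log a := by
    rw [← Real.log_exp 1]
    exact Real.log_le_log (Real.exp_pos 1) ha
  have h1H : 1 ≤ Real.log H := by
    rw [← Real.log_exp 1]
    exact Real.log_le_log (Real.exp_pos 1) hH
  have ha0 : (0:ℝ) < a := lt_of_lt_of_le (Real.exp_pos 1) ha
  have hH0 : (1:ℝ) ≤ H := le_trans (by nlinarith [Real.exp_one_gt_d9]) hH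
  have hb0 : (0:ℝ) < b := lt_trans one_pos hb
  have hlb : 0 < Real.log b := Real.log_pos hb
  have hd2 : (2:ℝ) ≤ (d:ℝ) := by exact_mod_cast hd
  -- degree bound
  have hdegfα : (minpoly ℚ (f α)).natDegree ≤ d := by
    set K := (IntermediateField.adjoin ℚ {α, f α} : IntermediateField ℚ ℂ) with hK
    haveI : FiniteDimensional ℚ K := by
      apply IntermediateField.finiteDimensional_adjoin
      intro x hx
      rcases hx with h | h
      · rw [h]; exact halgα.isIntegral
      · rw [Set.mem_singleton_iff.mp h]; exact halgf.isIntegral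
    have hmem : f α ∈ K :=
      IntermediateField.subset_adjoin ℚ _ (by right; rfl)
    set y : K := ⟨f α, hmem⟩ with hy
    have h1 : minpoly ℚ (f α) = minpoly ℚ y := by
      have : f α = algebraMap K ℂ y := rfl
      rw [this, minpoly.algebraMap_eq (algebraMap K ℂ).injective]
    rw [h1]
    exact le_trans (minpoly.natDegree_le y) hdeg
  -- Liouville lower bound
  have hlow : H ^ (-(d:ℝ)) ≤ ‖f α‖ :=
    liouville_bound halgf hfα0 hdegfα hH0 hHfα
  -- by contradiction
  by_contra hcon
  push_neg at hcon
  set ε := (Real.log b / Real.log a) / (2 * d * Real.log H) with hε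
  have hε0 : 0 < ε := by
    apply div_pos (div_pos hlb (by linarith)) (by nlinarith)
  have hαlt : ‖α‖ < 1 := by
    have := hS hα
    rw [Metric.mem_ball, Complex.dist_eq, sub_zero] at this
    exact this
  have h1α : 0 < 1 - ‖α‖ := by linarith
  have h1αε : 1 - ‖α‖ < ε := by linarith
  -- decay bound at α
  have hup := hdecay α hα
  have hexp : -(1 / (1 - ‖α‖)) ≤ -(1/ε) := by
    have : 1/ε ≤ 1/(1 - ‖α‖) := one_div_le_one_div_of_le h1α h1αε.le
    linarith
  have hup2 : ‖f α‖ ≤ a * b ^ (-(1/ε)) := by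
    calc ‖f α‖ ≤ a * b ^ (-(1 / (1 - ‖α‖))) := hup
    _ ≤ a * b ^ (-(1/ε)) := by
        apply mul_le_mul_of_nonneg_left _ ha0.le
        exact Real.rpow_le_rpow_of_exponent_le hb.le hexp
  -- combine and take logs
  have hcomb : H ^ (-(d:ℝ)) ≤ a * b ^ (-(1/ε)) := le_trans hlow hup2
  have hlhs0 : (0:ℝ) < H ^ (-(d:ℝ)) := Real.rpow_pos_of_pos (by linarith) _
  have hlog := Real.log_le_log hlhs0 hcomb
  rw [Real.log_rpow (by linarith : (0:ℝ) < H),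
    Real.log_mul (ne_of_gt ha0) (ne_of_gt (Real.rpow_pos_of_pos hb0 _)),
    Real.log_rpow hb0] at hlog
  -- compute (1/ε) * log b
  have hεval : (1/ε) * Real.log b = 2 * d * Real.log H * Real.log a := by
    rw [hε]
    field_simp
  have h2 : -(1/ε) * Real.log b = -(2 * d * Real.log H * Real.log a) := by
    rw [← hεval]; ring
  rw [h2] at hlog
  -- hlog : -(d) * log H ≤ log a + -(2*d*log H*log a)
  have hdln : (2:ℝ) ≤ (d:ℝ) * Real.log H := by nlinarith
  nlinarith [hlog, hdln, h1a,
    mul_nonneg (sub_nonneg.mpr h1a)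
      (by nlinarith : (0:ℝ) ≤ 2 * (d:ℝ) * Real.log H - 1)]
end
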